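/- Let n = m = 1, Ȳ > 0, and 0 ≤ α < 2√Ȳ. Define R_α = {(P,Q) ∈ ℝ^{1×k} × ℝ^{1×k} : ‖P + Q‖₂² ≥ α²}. If the disturbances satisfy ‖U(t)‖₂ + ‖V(t)‖₂ ≤ (1/√2)·α·(Ȳ − α²/4) for all t, then R_α is forward invariant under the disturbed gradient flow Ṗ = (Ȳ − PQᵀ)Q + U, Q̇ = (Ȳ − PQᵀ)P + V. -/

import Mathlib

theorem stmt8 {k : ℕ} (Y α : ℝ) (hY : 0 < Y) (hα0 : 0 ≤ α)
    (hα : α < 2 * Real.sqrt Y)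
    (P U Q V : ℝ → (Fin k → ℝ))
    (hP : ∀ t, HasDerivAt P ((Y - ∑ i, P t i * Q t i) • Q t + U t) t)
    (hQ : ∀ t, HasDerivAt Q ((Y - ∑ i, P t i * Q t i) • P t + V t) t)
    (hUV : ∀ t, Real.sqrt (∑ i, (U t i) ^ 2) + Real.sqrt (∑ i, (V t i) ^ 2)
              ≤ (1 / Real.sqrt 2) * α * (Y - α ^ 2 / 4))
    (h0 : α ^ 2 ≤ ∑ i, (P 0 i + Q 0 i) ^ 2) :
    ∀ t ≥ (0 : ℝ), α ^ 2 ≤ ∑ i, (P t i + Q t i) ^ 2 := by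
  rcases eq_or_lt_of_le hα0 with h0α | hαpos
  · intro t _
    rw [← h0α]
    simpa using Finset.sum_nonneg fun i _ => sq_nonneg (P t i + Q t i)
  -- Notation
  set c : ℝ → ℝ := fun t => ∑ i, P t i * Q t i with hcdef
  set f : ℝ → ℝ := fun t => ∑ i, (P t i + Q t i) ^ 2 with hfdef
  set f' : ℝ → ℝ := fun t =>
    ∑ i, (2 * (P t i + Q t i) * ((Y - c t) * (P t i + Q t i) + (U t i + V t i))) with hf'def
  have hf : ∀ t, HasDerivAt f (f' t) t := by
    intro t
    apply HasDerivAt.fun_sum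
    intro i _
    have hPi : HasDerivAt (fun s => P s i) ((Y - c t) * Q t i + U t i) t := by
      have := hasDerivAt_pi.1 (hP t) i
      simpa [smul_eq_mul] using this
    have hQi : HasDerivAt (fun s => Q s i) ((Y - c t) * P t i + V t i) t := by
      have := hasDerivAt_pi.1 (hQ t) i
      simpa [smul_eq_mul] using this
    have := ((hPi.add hQi).fun_pow 2)
    refine this.congr_deriv ?_
    simp only [Pi.add_apply]
    ring
  have hcont : Continuous f := by
    rw [continuous_iff_continuousAt]
    exact fun t => (hf t).continuousAt
  -- auxiliary positivity facts
  have hsqrt2 : (1:ℝ) < Real.sqrt 2 := by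
    have : Real.sqrt 1 < Real.sqrt 2 := Real.sqrt_lt_sqrt (by norm_num) (by norm_num)
    simpa using this
  have hYα : α ^ 2 / 4 < Y := by
    have hs : Real.sqrt Y ^ 2 = Y := Real.sq_sqrt hY.le
    nlinarith [Real.sqrt_nonneg Y]
  -- key lemma: on the boundary the derivative is positive
  have key : ∀ t, f t = α ^ 2 → 0 < f' t := by
    intro t hft
    have hc : c t ≤ α ^ 2 / 4 := by
      have h1 : (0:ℝ) ≤ ∑ i, (P t i - Q t i) ^ 2 :=
        Finset.sum_nonneg fun i _ => sq_nonneg _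
      have h2 : ∑ i, (P t i - Q t i) ^ 2 = (∑ i, (P t i + Q t i) ^ 2) - 4 * c t := by
        rw [hcdef, Finset.mul_sum, ← Finset.sum_sub_distrib]
        exact Finset.sum_congr rfl fun i _ => by ring
      have hft' : (∑ i, (P t i + Q t i) ^ 2) = α ^ 2 := hft
      rw [h2] at h1
      linarith
    have hsplit : f' t = 2 * (Y - c t) * f t + 2 * ∑ i, (P t i + Q t i) * (U t i + V t i) := by
      show (∑ i, (2 * (P t i + Q t i) * ((Y - c t) * (P t i + Q t i) + (U t i + V t i))))
        = 2 * (Y - c t) * (∑ i, (P t i + Q t i) ^ 2) + 2 * ∑ i, (P t i + Q t i) * (U t i + V t i)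
      rw [Finset.mul_sum, Finset.mul_sum, ← Finset.sum_add_distrib]
      exact Finset.sum_congr rfl fun i _ => by ring
    -- Cauchy-Schwarz bound on the cross term
    have hCS : -(α * ((1 / Real.sqrt 2) * α * (Y - α ^ 2 / 4))) ≤
        ∑ i, (P t i + Q t i) * (U t i + V t i) := by
      have h1 : ∑ i, (-(P t i + Q t i)) * (U t i + V t i) ≤
          Real.sqrt (∑ i, (-(P t i + Q t i)) ^ 2) * Real.sqrt (∑ i, (U t i + V t i) ^ 2) :=
        Real.sum_mul_le_sqrt_mul_sqrt _ _ _
      have hft' : (∑ i, (P t i + Q t i) ^ 2) = α ^ 2 := hft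
      have h2 : ∑ i, (-(P t i + Q t i)) ^ 2 = α ^ 2 := by
        rw [← hft']; exact Finset.sum_congr rfl fun i _ => by ring
      have h3 : Real.sqrt (α ^ 2) = α := Real.sqrt_sq hα0
      -- triangle-type bound: sqrt ∑ (u+v)^2 ≤ sqrt ∑ u^2 + sqrt ∑ v^2
      have h4 : Real.sqrt (∑ i, (U t i + V t i) ^ 2) ≤
          Real.sqrt (∑ i, (U t i) ^ 2) + Real.sqrt (∑ i, (V t i) ^ 2) := by
        set a := Real.sqrt (∑ i, (U t i) ^ 2) with ha
        set b := Real.sqrt (∑ i, (V t i) ^ 2) with hb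
        have ha2 : a ^ 2 = ∑ i, (U t i) ^ 2 :=
          Real.sq_sqrt (Finset.sum_nonneg fun i _ => sq_nonneg _)
        have hb2 : b ^ 2 = ∑ i, (V t i) ^ 2 :=
          Real.sq_sqrt (Finset.sum_nonneg fun i _ => sq_nonneg _)
        have hcs : ∑ i, U t i * V t i ≤ a * b := by
          have := Real.sum_mul_le_sqrt_mul_sqrt (Finset.univ) (fun i => U t i) (fun i => V t i)
          simpa [ha, hb] using this
        have hexp : ∑ i, (U t i + V t i) ^ 2 ≤ (a + b) ^ 2 := by
          have : ∑ i, (U t i + V t i) ^ 2 =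
              (∑ i, (U t i) ^ 2) + 2 * (∑ i, U t i * V t i) + (∑ i, (V t i) ^ 2) := by
            rw [Finset.mul_sum, ← Finset.sum_add_distrib, ← Finset.sum_add_distrib]
            exact Finset.sum_congr rfl fun i _ => by ring
          rw [this]
          nlinarith
        calc Real.sqrt (∑ i, (U t i + V t i) ^ 2) ≤ Real.sqrt ((a + b) ^ 2) :=
              Real.sqrt_le_sqrt hexp
          _ = a + b := Real.sqrt_sq (by positivity)
      have h5 := hUV t
      have h6 : ∑ i, (-(P t i + Q t i)) * (U t i + V t i) =
          -∑ i, (P t i + Q t i) * (U t i + V t i) := by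
        rw [← Finset.sum_neg_distrib]
        exact Finset.sum_congr rfl fun i _ => by ring
      have hsq : (0:ℝ) ≤ Real.sqrt (∑ i, (U t i + V t i) ^ 2) := Real.sqrt_nonneg _
      rw [h6] at h1
      rw [h2, h3] at h1
      nlinarith [Real.sqrt_nonneg (∑ i, (U t i + V t i) ^ 2)]
    rw [hsplit, hft]
    have hD : 0 < Y - α ^ 2 / 4 := by linarith
    have h7 : α * ((1 / Real.sqrt 2) * α * (Y - α ^ 2 / 4)) < (Y - c t) * α ^ 2 := by
      have hs2 : 0 < Real.sqrt 2 := by linarith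
      have : (1 / Real.sqrt 2) < 1 := by
        rw [div_lt_one hs2]; exact hsqrt2
      have h8 : α * ((1 / Real.sqrt 2) * α * (Y - α ^ 2 / 4)) < α * (1 * α * (Y - α ^ 2 / 4)) := by
        apply mul_lt_mul_of_pos_left _ hαpos
        apply mul_lt_mul_of_pos_right _ hD
        nlinarith
      have h9 : α * (1 * α * (Y - α ^ 2 / 4)) ≤ (Y - c t) * α ^ 2 := by
        nlinarith
      linarith
    linarith
  -- forward invariance via contradiction
  intro t ht
  by_contra hlt
  push_neg at hlt
  have ht0 : t ≠ 0 := by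
    intro h; rw [h] at hlt; exact absurd h0 (not_le.2 hlt)
  have htpos : 0 < t := lt_of_le_of_ne ht (Ne.symm ht0)
  set S : Set ℝ := {s | s ∈ Set.Icc (0:ℝ) t ∧ α ^ 2 ≤ f s} with hSdef
  have hSne : S.Nonempty := ⟨0, ⟨le_refl 0, htpos.le⟩, h0⟩
  have hSclosed : IsClosed S := by
    have : S = Set.Icc 0 t ∩ f ⁻¹' Set.Ici (α ^ 2) := rfl
    rw [this]
    exact isClosed_Icc.inter (isClosed_Ici.preimage hcont)
  have hScomp : IsCompact S :=
    (isCompact_Icc (a := (0:ℝ)) (b := t)).of_isClosed_subset hSclosed fun s hs => hs.1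
  set T := sSup S with hTdef
  have hTS : T ∈ S := hScomp.sSup_mem hSne
  have hT0 : 0 ≤ T := hTS.1.1
  have hTt : T ≤ t := hTS.1.2
  have hTlt : T < t := lt_of_le_of_ne hTt (by intro h; rw [h] at hTS; exact absurd hTS.2 (not_le.2 hlt))
  have hlt' : ∀ s ∈ Set.Ioc T t, f s < α ^ 2 := by
    intro s hs
    by_contra hge
    push_neg at hge
    have hsS : s ∈ S := ⟨⟨hT0.trans hs.1.le, hs.2⟩, hge⟩
    exact absurd (le_csSup hScomp.bddAbove hsS) (not_le.2 hs.1)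
  have hfT : f T = α ^ 2 := by
    refine le_antisymm ?_ hTS.2
    have htend : Filter.Tendsto f (nhdsWithin T (Set.Ioi T)) (nhds (f T)) :=
      (hcont.continuousAt).continuousWithinAt.tendsto
    have hev : ∀ᶠ s in nhdsWithin T (Set.Ioi T), f s ≤ α ^ 2 := by
      filter_upwards [Ioc_mem_nhdsGT_of_mem ⟨le_refl T, hTlt⟩] with s hs
      exact (hlt' s hs).le
    exact le_of_tendsto htend hev
  have hd : 0 < f' T := key T hfT
  have hslope : Filter.Tendsto (slope f T) (nhdsWithin T {T}ᶜ) (nhds (f' T)) :=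
    hasDerivAt_iff_tendsto_slope.1 (hf T)
  have hslope' : Filter.Tendsto (slope f T) (nhdsWithin T (Set.Ioi T)) (nhds (f' T)) :=
    hslope.mono_left (nhdsWithin_mono T fun s hs => ne_of_gt hs)
  have hev1 : ∀ᶠ s in nhdsWithin T (Set.Ioi T), 0 < slope f T s :=
    hslope' (Ioi_mem_nhds hd)
  have hev2 : ∀ᶠ s in nhdsWithin T (Set.Ioi T), s ∈ Set.Ioc T t :=
    Ioc_mem_nhdsGT_of_mem ⟨le_refl T, hTlt⟩
  obtain ⟨s, hs1, hs2⟩ := (hev1.and hev2).exists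
  rw [slope_def_field] at hs1
  have hsT : 0 < s - T := sub_pos.2 hs2.1
  have : f T < f s := by
    have := div_pos_iff.1 hs1
    rcases this with ⟨h1, _⟩ | ⟨_, h2⟩
    · linarith
    · linarith
  rw [hfT] at this
  exact absurd (hlt' s hs2) (not_lt.2 this.le)
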